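/- Let λ, μ ∈ ℂ be nonzero algebraic numbers such that the minimal polynomial of λ over ℚ equals the minimal polynomial of μ over ℚ or the minimal polynomial of μ^{-1} over ℚ. Then the groups G(λ) and G(μ) are isomorphic. -/

import Mathlib

/-- The semidirect product `R ⋊_u ℤ`: underlying set `R × ℤ` with multiplication
`(r, k) · (r', k') = (r + u^k · r', k + k')`, where `u` is a unit of the commutative ring
`R`. -/
def SDP (R : Type*) [CommRing R] (u : Rˣ) : Type _ := R × ℤ

namespace SDP

variable {R : Type*} [CommRing R] {u : Rˣ}

instance : Mul (SDP R u) := ⟨fun g h => (g.1 + ((u ^ g.2 : Rˣ) : R) * h.1, g.2 + h.2)⟩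
instance : One (SDP R u) := ⟨((0 : R), (0 : ℤ))⟩
instance : Inv (SDP R u) := ⟨fun g => (-(((u ^ (-g.2) : Rˣ) : R) * g.1), -g.2)⟩

theorem mul_def (g h : SDP R u) :
    g * h = (g.1 + ((u ^ g.2 : Rˣ) : R) * h.1, g.2 + h.2) := rfl
theorem one_def : (1 : SDP R u) = ((0 : R), (0 : ℤ)) := rfl
theorem inv_def (g : SDP R u) : g⁻¹ = (-(((u ^ (-g.2) : Rˣ) : R) * g.1), -g.2) := rfl

instance instGroup : Group (SDP R u) where
  mul_assoc a b c := by
    rw [mul_def, mul_def, mul_def, mul_def]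
    refine Prod.ext ?_ ?_
    · show (a.1 + ↑(u ^ a.2) * b.1) + ↑(u ^ (a.2 + b.2)) * c.1
        = a.1 + ↑(u ^ a.2) * (b.1 + ↑(u ^ b.2) * c.1)
      rw [zpow_add]; push_cast; ring
    · show (a.2 + b.2) + c.2 = a.2 + (b.2 + c.2); omega
  one_mul a := by
    rw [mul_def]
    refine Prod.ext ?_ ?_
    · show (0 : R) + ↑(u ^ (0 : ℤ)) * a.1 = a.1; simp
    · show (0 : ℤ) + a.2 = a.2; omega
  mul_one a := by
    rw [mul_def]
    refine Prod.ext ?_ ?_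
    · show a.1 + ↑(u ^ a.2) * (0 : R) = a.1; simp
    · show a.2 + (0 : ℤ) = a.2; omega
  inv_mul_cancel a := by
    rw [mul_def]
    refine Prod.ext ?_ ?_
    · show -(↑(u ^ (-a.2)) * a.1) + ↑(u ^ (-a.2)) * a.1 = (0 : R); simp
    · show -a.2 + a.2 = (0 : ℤ); omega

end SDP
/-- `R_λ = ℤ[λ, λ⁻¹]`, the smallest subring of `ℂ` containing `λ` and `λ⁻¹`. -/
def Rring (l : ℂ) : Subring ℂ := Subring.closure {l, l⁻¹}

/-- `λ` as a unit of `R_λ` (for `λ ≠ 0`). -/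
noncomputable def Runit (l : ℂ) (hl : l ≠ 0) : (Rring l)ˣ where
  val := ⟨l, Subring.subset_closure (by simp)⟩
  inv := ⟨l⁻¹, Subring.subset_closure (by simp)⟩
  val_inv := Subtype.ext (mul_inv_cancel₀ hl)
  inv_val := Subtype.ext (inv_mul_cancel₀ hl)

/-- `G(λ) = R_λ ⋊ ℤ`, where the generator `1 ∈ ℤ` acts by multiplication by `λ`:
the set `R_λ × ℤ` with multiplication `(r, k) · (r', k') = (r + λ^k r', k + k')`. -/
noncomputable def Gl (l : ℂ) (hl : l ≠ 0) : Type := SDP (Rring l) (Runit l hl)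

noncomputable instance (l : ℂ) (hl : l ≠ 0) : Group (Gl l hl) :=
  inferInstanceAs (Group (SDP (Rring l) (Runit l hl)))


section Aux

/-- A ring isomorphism carrying `u` to `v` induces a group isomorphism `SDP R u ≃* SDP S v`. -/
def SDP.congr {R S : Type*} [CommRing R] [CommRing S] {u : Rˣ} {v : Sˣ}
    (e : R ≃+* S) (huv : Units.map (e : R →* S) u = v) : SDP R u ≃* SDP S v where
  toFun g := ((e g.1, g.2) : S × ℤ)
  invFun g := ((e.symm g.1, g.2) : R × ℤ)
  left_inv g := by
    show ((e.symm (e g.1), g.2) : R × ℤ) = g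
    simp; rfl
  right_inv g := by
    show ((e (e.symm g.1), g.2) : S × ℤ) = g
    simp; rfl
  map_mul' g h := by
    rw [SDP.mul_def]
    show ((e (g.1 + ((u ^ g.2 : Rˣ) : R) * h.1), g.2 + h.2) : S × ℤ)
        = ((e g.1 + ((v ^ g.2 : Sˣ) : S) * e h.1, g.2 + h.2) : S × ℤ)
    refine Prod.ext ?_ rfl
    rw [map_add, map_mul]
    congr 1
    rw [← huv, ← map_zpow]
    rfl

/-- The "flip" isomorphism `SDP R u ≃* SDP R u⁻¹`, `(r, k) ↦ (r, -k)`. -/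
def SDP.invCongr {R : Type*} [CommRing R] (u : Rˣ) : SDP R u ≃* SDP R u⁻¹ where
  toFun g := ((g.1, -g.2) : R × ℤ)
  invFun g := ((g.1, -g.2) : R × ℤ)
  left_inv g := by show ((g.1, -(-g.2)) : R × ℤ) = g; simp; rfl
  right_inv g := by show ((g.1, -(-g.2)) : R × ℤ) = g; simp; rfl
  map_mul' g h := by
    rw [SDP.mul_def]
    show ((g.1 + ((u ^ g.2 : Rˣ) : R) * h.1, -(g.2 + h.2)) : R × ℤ)
        = ((g.1 + (((u⁻¹) ^ (-g.2) : Rˣ) : R) * h.1, -g.2 + -h.2) : R × ℤ)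
    refine Prod.ext ?_ (by omega)
    rw [inv_zpow, zpow_neg, inv_inv]

lemma Rring_le {x : ℂ} {K : IntermediateField ℚ ℂ} (hx : x ∈ K) :
    ∀ z ∈ Rring x, z ∈ K := by
  intro z hz
  have h : Rring x ≤ K.toSubalgebra.toSubring := by
    rw [Rring, Subring.closure_le]
    intro w hw
    rcases hw with rfl | rfl
    · exact hx
    · exact (inv_mem hx : x⁻¹ ∈ K)
  exact h hz

lemma Rring_mapsTo {x y : ℂ} {K L : IntermediateField ℚ ℂ} (hxK : x ∈ K) (σ : K →+* L)
    (hσx : ((σ ⟨x, hxK⟩ : L) : ℂ) = y) :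
    ∀ z (hz : z ∈ Rring x), ((σ ⟨z, Rring_le hxK z hz⟩ : L) : ℂ) ∈ Rring y := by
  intro z hz
  induction hz using Subring.closure_induction with
  | mem w hw =>
      have hw' : w = x ∨ w = x⁻¹ := by simpa using hw
      have hwK : w ∈ K := Rring_le hxK w (Subring.subset_closure hw)
      show ((σ ⟨w, hwK⟩ : L) : ℂ) ∈ Rring y
      rcases hw' with h | h
      · have e1 : (⟨w, hwK⟩ : K) = ⟨x, hxK⟩ := Subtype.ext h
        rw [e1, hσx]
        exact Subring.subset_closure (by simp)
      · have e1 : (⟨w, hwK⟩ : K) = (⟨x, hxK⟩ : K)⁻¹ := Subtype.ext (by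
          rw [IntermediateField.coe_inv]; exact h)
        rw [e1, map_inv₀]
        have e2 : (((σ ⟨x, hxK⟩)⁻¹ : L) : ℂ) = (((σ ⟨x, hxK⟩) : L) : ℂ)⁻¹ := by
          rw [IntermediateField.coe_inv]
        rw [e2, hσx]
        exact Subring.subset_closure (by simp)
  | zero =>
      show ((σ 0 : L) : ℂ) ∈ Rring y
      rw [map_zero]
      exact zero_mem _
  | one =>
      show ((σ 1 : L) : ℂ) ∈ Rring y
      rw [map_one]
      exact one_mem _
  | add a b ha hb iha ihb =>
      show ((σ (⟨a, Rring_le hxK a ha⟩ + ⟨b, Rring_le hxK b hb⟩) : L) : ℂ) ∈ Rring y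
      rw [map_add]
      exact add_mem iha ihb
  | neg a ha iha =>
      show ((σ (-⟨a, Rring_le hxK a ha⟩) : L) : ℂ) ∈ Rring y
      rw [map_neg]
      exact neg_mem iha
  | mul a b ha hb iha ihb =>
      show ((σ (⟨a, Rring_le hxK a ha⟩ * ⟨b, Rring_le hxK b hb⟩) : L) : ℂ) ∈ Rring y
      rw [map_mul]
      exact mul_mem iha ihb

/-- The ring hom `Rring x →+* Rring y` induced by a field embedding sending `x` to `y`. -/
noncomputable def rrHom {x y : ℂ} {K L : IntermediateField ℚ ℂ} (hxK : x ∈ K) (σ : K →+* L)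
    (hσx : ((σ ⟨x, hxK⟩ : L) : ℂ) = y) : Rring x →+* Rring y where
  toFun a := ⟨σ ⟨a.1, Rring_le hxK a.1 a.2⟩, Rring_mapsTo hxK σ hσx a.1 a.2⟩
  map_one' := Subtype.ext <| by
    show ((σ 1 : L) : ℂ) = 1
    rw [map_one]; rfl
  map_mul' a b := Subtype.ext <| by
    show ((σ (⟨a.1, Rring_le hxK a.1 a.2⟩ * ⟨b.1, Rring_le hxK b.1 b.2⟩) : L) : ℂ) = _
    rw [map_mul]; rfl
  map_zero' := Subtype.ext <| by
    show ((σ 0 : L) : ℂ) = 0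
    rw [map_zero]; rfl
  map_add' a b := Subtype.ext <| by
    show ((σ (⟨a.1, Rring_le hxK a.1 a.2⟩ + ⟨b.1, Rring_le hxK b.1 b.2⟩) : L) : ℂ) = _
    rw [map_add]; rfl

/-- The ring equivalence `Rring x ≃+* Rring y` induced by a field isomorphism sending `x`
to `y`. -/
noncomputable def rrEquiv {x y : ℂ} {K L : IntermediateField ℚ ℂ} (hxK : x ∈ K) (hyL : y ∈ L)
    (σ : K ≃+* L) (hσx : ((σ ⟨x, hxK⟩ : L) : ℂ) = y) : Rring x ≃+* Rring y := by
  have hσy : ((σ.symm ⟨y, hyL⟩ : K) : ℂ) = x := by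
    rw [show (⟨y, hyL⟩ : L) = σ ⟨x, hxK⟩ from Subtype.ext hσx.symm, RingEquiv.symm_apply_apply]
  refine RingEquiv.ofRingHom (rrHom hxK (σ : K →+* L) hσx)
    (rrHom hyL (σ.symm : L →+* K) hσy) ?_ ?_
  swap
  · ext a
    show ((σ.symm ⟨((σ ⟨a.1, _⟩ : L) : ℂ), _⟩ : K) : ℂ) = (a : ℂ)
    rw [show (⟨((σ ⟨a.1, Rring_le hxK a.1 a.2⟩ : L) : ℂ), _⟩ : L)
          = σ ⟨a.1, Rring_le hxK a.1 a.2⟩ from rfl, RingEquiv.symm_apply_apply]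
  · ext b
    show ((σ ⟨((σ.symm ⟨b.1, _⟩ : K) : ℂ), _⟩ : L) : ℂ) = (b : ℂ)
    rw [show (⟨((σ.symm ⟨b.1, Rring_le hyL b.1 b.2⟩ : K) : ℂ), _⟩ : K)
          = σ.symm ⟨b.1, Rring_le hyL b.1 b.2⟩ from rfl, RingEquiv.apply_symm_apply]

lemma rrEquiv_apply_val {x y : ℂ} {K L : IntermediateField ℚ ℂ} (hxK : x ∈ K) (hyL : y ∈ L)
    (σ : K ≃+* L) (hσx : ((σ ⟨x, hxK⟩ : L) : ℂ) = y) (a : Rring x) :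
    ((rrEquiv hxK hyL σ hσx a : Rring y) : ℂ) = ((σ ⟨a.1, Rring_le hxK a.1 a.2⟩ : L) : ℂ) := rfl

lemma Rring_inv (x : ℂ) : Rring x⁻¹ = Rring x := by
  unfold Rring
  rw [inv_inv, Set.pair_comm]

end Aux

/-- If `λ` and `μ` are nonzero algebraic numbers and `λ` has the same minimal polynomial
over `ℚ` as `μ` or as `μ⁻¹`, then the groups `G(λ)` and `G(μ)` are isomorphic. -/
theorem Gl_iso_of_minpoly_eq
    (l m : ℂ) (hl : l ≠ 0) (hm : m ≠ 0)
    (hla : IsAlgebraic ℚ l) (hma : IsAlgebraic ℚ m)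
    (hmin : minpoly ℚ l = minpoly ℚ m ∨ minpoly ℚ l = minpoly ℚ m⁻¹) :
    Nonempty (Gl l hl ≃* Gl m hm) := by
  have key : ∀ (y : ℂ) (hy : y ≠ 0), minpoly ℚ l = minpoly ℚ y →
      Nonempty (Gl l hl ≃* SDP (Rring y) (Runit y hy)) := by
    intro y hy hmineq
    set σ0 := minpoly.algEquiv hla hmineq with hσ0
    have hxK : l ∈ IntermediateField.adjoin ℚ {l} :=
      IntermediateField.mem_adjoin_simple_self ℚ l
    have hyL : y ∈ IntermediateField.adjoin ℚ {y} :=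
      IntermediateField.mem_adjoin_simple_self ℚ y
    have hσx : ((σ0.toRingEquiv ⟨l, hxK⟩ : IntermediateField.adjoin ℚ {y}) : ℂ) = y := by
      have h := minpoly.algEquiv_apply hla hmineq
      exact congrArg Subtype.val h
    refine ⟨SDP.congr (rrEquiv hxK hyL σ0.toRingEquiv hσx) (Units.ext (Subtype.ext ?_))⟩
    show ((rrEquiv hxK hyL σ0.toRingEquiv hσx (Runit l hl).val : Rring y) : ℂ)
        = ((Runit y hy).val : ℂ)
    rw [rrEquiv_apply_val]
    exact hσx
  rcases hmin with h | h
  · obtain ⟨E⟩ := key m hm h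
    exact ⟨E⟩
  · obtain ⟨E⟩ := key m⁻¹ (inv_ne_zero hm) h
    have e2 : SDP (Rring m⁻¹) (Runit m⁻¹ (inv_ne_zero hm))
        ≃* SDP (Rring m) (Runit m hm)⁻¹ :=
      SDP.congr (RingEquiv.subringCongr (Rring_inv m)) (Units.ext (Subtype.ext rfl))
    exact ⟨(E.trans e2).trans (SDP.invCongr (Runit m hm)).symm⟩
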